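/- Let I be a nonempty open real interval, γ ∈ ℝ, and let f : I → ℝ be a three times differentiable function whose first derivative does not vanish on I. Then the following two assertions are equivalent: (i) there exist twice differentiable functions u,v : I → ℝ such that v does not vanish on I, u'' = γu, v'' = γv, and f = u/v on I; (ii) f satisfies the third-order differential equation S(f) = −2γ on I. -/

import Mathlib

open Set

lemma deriv_congr_on {s : Set ℝ} (hs : IsOpen s) {f g : ℝ → ℝ}
    (h : ∀ y ∈ s, f y = g y) {x : ℝ} (hx : x ∈ s) : deriv f x = deriv g x :=
  Filter.EventuallyEq.deriv_eq (Filter.eventuallyEq_of_mem (hs.mem_nhds hx) h)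

lemma diffAt_congr_on {s : Set ℝ} (hs : IsOpen s) {f g : ℝ → ℝ}
    (h : ∀ y ∈ s, f y = g y) {x : ℝ} (hx : x ∈ s) (hg : DifferentiableAt ℝ g x) :
    DifferentiableAt ℝ f x :=
  hg.congr_of_eventuallyEq (Filter.eventuallyEq_of_mem (hs.mem_nhds hx) h)

/-- The Schwarzian derivative `S(f) = f'''/f' - (3/2) (f''/f')²`. -/
noncomputable def schwarzian (f : ℝ → ℝ) (x : ℝ) : ℝ :=
  deriv (deriv (deriv f)) x / deriv f x - 3 / 2 * (deriv (deriv f) x / deriv f x) ^ 2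

lemma forward_dir (I : Set ℝ) (hIopen : IsOpen I)
    (γ : ℝ) (f u v : ℝ → ℝ)
    (hf' : ∀ x ∈ I, deriv f x ≠ 0)
    (hu1 : ∀ x ∈ I, DifferentiableAt ℝ u x) (hu2 : ∀ x ∈ I, DifferentiableAt ℝ (deriv u) x)
    (hv1 : ∀ x ∈ I, DifferentiableAt ℝ v x) (hv2 : ∀ x ∈ I, DifferentiableAt ℝ (deriv v) x)
    (hv0 : ∀ x ∈ I, v x ≠ 0)
    (hu'' : ∀ x ∈ I, deriv (deriv u) x = γ * u x)
    (hv'' : ∀ x ∈ I, deriv (deriv v) x = γ * v x)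
    (hfuv : ∀ x ∈ I, f x = u x / v x) :
    ∀ x ∈ I, schwarzian f x = -2 * γ := by
  set N : ℝ → ℝ := fun x => deriv u x * v x - u x * deriv v x with hN
  have hNd : ∀ x ∈ I, HasDerivAt N 0 x := by
    intro x hx
    have h := ((hu2 x hx).hasDerivAt.mul (hv1 x hx).hasDerivAt).sub
      ((hu1 x hx).hasDerivAt.mul (hv2 x hx).hasDerivAt)
    have e : deriv (deriv u) x * v x + deriv u x * deriv v x -
        (deriv u x * deriv v x + u x * deriv (deriv v) x) = 0 := by
      rw [hu'' x hx, hv'' x hx]; ring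
    rwa [e] at h
  set F1 : ℝ → ℝ := fun x => N x / v x ^ 2 with hF1
  have hd1 : ∀ x ∈ I, deriv f x = F1 x := by
    intro x hx
    have h := deriv_congr_on hIopen hfuv hx
    rw [h, show (fun y => u y / v y) = u / v from rfl, deriv_div (hu1 x hx) (hv1 x hx) (hv0 x hx)]
  have hF1d : ∀ x ∈ I, HasDerivAt F1 (-2 * deriv v x * N x / v x ^ 3) x := by
    intro x hx
    have h := (hNd x hx).div ((hv1 x hx).hasDerivAt.pow 2) (pow_ne_zero 2 (hv0 x hx))
    convert h using 1
    · rfl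
    · rfl
    · rfl
    simp only [Pi.pow_apply]
    field_simp [hv0 x hx]
    ring
  set F2 : ℝ → ℝ := fun x => -2 * deriv v x * N x / v x ^ 3 with hF2
  have hd2 : ∀ x ∈ I, deriv (deriv f) x = F2 x := by
    intro x hx
    rw [deriv_congr_on hIopen hd1 hx, (hF1d x hx).deriv]
  have hF2d : ∀ x ∈ I, HasDerivAt F2
      (((-2 * deriv (deriv v) x * N x + -2 * deriv v x * 0) * v x ^ 3 -
        (-2 * deriv v x * N x) * (3 * v x ^ 2 * deriv v x)) / (v x ^ 3) ^ 2) x := by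
    intro x hx
    exact ((((hv2 x hx).hasDerivAt.const_mul (-2)).mul (hNd x hx)).div
      ((hv1 x hx).hasDerivAt.pow 3) (pow_ne_zero 3 (hv0 x hx)))
  have hd3 : ∀ x ∈ I, deriv (deriv (deriv f)) x =
      ((-2 * deriv (deriv v) x * N x + -2 * deriv v x * 0) * v x ^ 3 -
        (-2 * deriv v x * N x) * (3 * v x ^ 2 * deriv v x)) / (v x ^ 3) ^ 2 := by
    intro x hx
    rw [deriv_congr_on hIopen hd2 hx, (hF2d x hx).deriv]
  intro x hx
  have hN0 : N x ≠ 0 := by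
    intro h0
    apply hf' x hx
    rw [hd1 x hx]
    simp [hF1, h0]
  unfold schwarzian
  rw [hd3 x hx, hd2 x hx, hd1 x hx, hv'' x hx]
  simp only [hF1, hF2]
  field_simp [hv0 x hx]
  ring

lemma backward_dir (I : Set ℝ) (hIopen : IsOpen I) (hIne : I.Nonempty) (hIconn : I.OrdConnected)
    (γ : ℝ) (f : ℝ → ℝ)
    (hf1 : ∀ x ∈ I, DifferentiableAt ℝ f x)
    (hf2 : ∀ x ∈ I, DifferentiableAt ℝ (deriv f) x)
    (hf3 : ∀ x ∈ I, DifferentiableAt ℝ (deriv (deriv f)) x)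
    (hf' : ∀ x ∈ I, deriv f x ≠ 0)
    (hS : ∀ x ∈ I, schwarzian f x = -2 * γ) :
    ∃ u v : ℝ → ℝ,
      (∀ x ∈ I, DifferentiableAt ℝ u x) ∧ (∀ x ∈ I, DifferentiableAt ℝ (deriv u) x) ∧
      (∀ x ∈ I, DifferentiableAt ℝ v x) ∧ (∀ x ∈ I, DifferentiableAt ℝ (deriv v) x) ∧
      (∀ x ∈ I, v x ≠ 0) ∧
      (∀ x ∈ I, deriv (deriv u) x = γ * u x) ∧
      (∀ x ∈ I, deriv (deriv v) x = γ * v x) ∧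
      (∀ x ∈ I, f x = u x / v x) := by
  obtain ⟨x₀, hx₀⟩ := hIne
  set ε : ℝ := if 0 < deriv f x₀ then 1 else -1 with hε
  have hε2 : ε * ε = 1 := by rw [hε]; split_ifs <;> norm_num
  have hε0 : ε * deriv f x₀ > 0 := by
    rw [hε]; split_ifs with h
    · simpa using h
    · have := hf' x₀ hx₀
      push_neg at h
      rcases lt_or_eq_of_le h with h' | h'
      · nlinarith
      · exact absurd h'.symm (Ne.symm this)
  -- sign constancy
  have hpos : ∀ x ∈ I, 0 < ε * deriv f x := by
    intro x hx
    by_contra h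
    push_neg at h
    have hcont : ContinuousOn (fun y => ε * deriv f y) (uIcc x x₀) := by
      intro y hy
      exact ((hf2 y (hIconn.uIcc_subset hx hx₀ hy)).continuousAt.const_smul ε).continuousWithinAt
    have h0 : (0:ℝ) ∈ uIcc (ε * deriv f x) (ε * deriv f x₀) := by
      rw [Set.mem_uIcc]; left; exact ⟨h, le_of_lt hε0⟩
    obtain ⟨c, hc, hc0⟩ := intermediate_value_uIcc hcont h0
    have hcI : c ∈ I := hIconn.uIcc_subset hx hx₀ hc
    apply hf' c hcI
    simp only at hc0
    have : ε * (ε * deriv f c) = ε * 0 := by rw [hc0]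
    rwa [← mul_assoc, hε2, one_mul, mul_zero] at this
  -- construction
  set q : ℝ → ℝ := fun x => Real.sqrt (ε * deriv f x) with hqdef
  set v : ℝ → ℝ := fun x => (q x)⁻¹ with hvdef
  set u : ℝ → ℝ := fun x => f x * v x with hudef
  have hq : ∀ x ∈ I, 0 < q x := fun x hx => Real.sqrt_pos.mpr (hpos x hx)
  have hq2 : ∀ x ∈ I, q x ^ 2 = ε * deriv f x := fun x hx => Real.sq_sqrt (le_of_lt (hpos x hx))
  have hεne : ε ≠ 0 := by intro h; rw [h] at hε2; norm_num at hε2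
  have ha : ∀ x ∈ I, deriv f x = ε * q x ^ 2 := by
    intro x hx
    rw [hq2 x hx, ← mul_assoc, hε2, one_mul]
  have hqd : ∀ x ∈ I, HasDerivAt q (ε * deriv (deriv f) x / (2 * q x)) x := by
    intro x hx
    have hpd : HasDerivAt (fun y => ε * deriv f y) (ε * deriv (deriv f) x) x :=
      (hf2 x hx).hasDerivAt.const_mul ε
    have h := (Real.hasDerivAt_sqrt (ne_of_gt (hpos x hx))).comp x hpd
    convert h using 1
    · rfl
    · rfl
    · rfl
    rw [hqdef]
    field_simp
  have hvd : ∀ x ∈ I, HasDerivAt v (-(ε * deriv (deriv f) x) / (2 * q x ^ 3)) x := by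
    intro x hx
    have h := (hqd x hx).inv (ne_of_gt (hq x hx))
    convert h using 1
    · rfl
    · rfl
    · rfl
    rw [show (2:ℝ) * q x ^ 3 = (2 * q x) * q x ^ 2 by ring, ← div_div, ← neg_div]
  set V : ℝ → ℝ := fun x => -(ε * deriv (deriv f) x) / (2 * q x ^ 3) with hVdef
  have hdv : ∀ x ∈ I, deriv v x = V x := fun x hx => (hvd x hx).deriv
  have hVd : ∀ x ∈ I, HasDerivAt V (γ * v x) x := by
    intro x hx
    have hnum : HasDerivAt (fun y => -(ε * deriv (deriv f) y)) (-(ε * deriv (deriv (deriv f)) x)) x :=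
      ((hf3 x hx).hasDerivAt.const_mul ε).neg
    have hden : HasDerivAt (fun y => 2 * q y ^ 3)
        (2 * (3 * q x ^ 2 * (ε * deriv (deriv f) x / (2 * q x)))) x :=
      ((hqd x hx).pow 3).const_mul 2
    have hqx := hq x hx
    have hden0 : 2 * q x ^ 3 ≠ 0 := by positivity
    have h := hnum.div hden hden0
    convert h using 1
    · rfl
    · rfl
    · rfl
    have h1 := hS x hx
    unfold schwarzian at h1
    rw [ha x hx] at h1
    have hqne := (hq x hx).ne'
    rw [hvdef]
    field_simp at h1 ⊢
    linear_combination h1 - (4*γ*q x^4 + 3*deriv (deriv f) x^2) * hε2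
  have hv0 : ∀ x ∈ I, v x ≠ 0 := fun x hx => (inv_pos.mpr (hq x hx)).ne'
  have hv1 : ∀ x ∈ I, DifferentiableAt ℝ v x := fun x hx => (hvd x hx).differentiableAt
  have hv2 : ∀ x ∈ I, DifferentiableAt ℝ (deriv v) x :=
    fun x hx => diffAt_congr_on hIopen hdv hx (hVd x hx).differentiableAt
  have hv'' : ∀ x ∈ I, deriv (deriv v) x = γ * v x := by
    intro x hx
    rw [deriv_congr_on hIopen hdv hx, (hVd x hx).deriv]
  -- u
  have hud : ∀ x ∈ I, HasDerivAt u (deriv f x * v x + f x * V x) x := by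
    intro x hx
    have h := (hf1 x hx).hasDerivAt.mul (hvd x hx)
    exact h
  set U1 : ℝ → ℝ := fun x => deriv f x * v x + f x * V x with hU1def
  have hdu : ∀ x ∈ I, deriv u x = U1 x := fun x hx => (hud x hx).deriv
  have hU1d : ∀ x ∈ I, HasDerivAt U1
      (deriv (deriv f) x * v x + deriv f x * V x + (deriv f x * V x + f x * (γ * v x))) x := by
    intro x hx
    exact ((hf2 x hx).hasDerivAt.mul (hvd x hx)).add ((hf1 x hx).hasDerivAt.mul (hVd x hx))
  have hu1 : ∀ x ∈ I, DifferentiableAt ℝ u x := fun x hx => (hud x hx).differentiableAt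
  have hu2 : ∀ x ∈ I, DifferentiableAt ℝ (deriv u) x :=
    fun x hx => diffAt_congr_on hIopen hdu hx (hU1d x hx).differentiableAt
  have hu'' : ∀ x ∈ I, deriv (deriv u) x = γ * u x := by
    intro x hx
    rw [deriv_congr_on hIopen hdu hx, (hU1d x hx).deriv]
    have hqne := (hq x hx).ne'
    have hcancel : deriv (deriv f) x * v x + 2 * (deriv f x * V x) = 0 := by
      rw [hvdef, hVdef, ha x hx]
      field_simp
      linear_combination (-deriv (deriv f) x) * hε2
    have : deriv (deriv f) x * v x + deriv f x * V x + (deriv f x * V x + f x * (γ * v x))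
        = (deriv (deriv f) x * v x + 2 * (deriv f x * V x)) + γ * (f x * v x) := by ring
    rw [this, hcancel, zero_add, hudef]
  refine ⟨u, v, hu1, hu2, hv1, hv2, hv0, hu'', hv'', ?_⟩
  intro x hx
  rw [hudef]
  rw [mul_div_assoc, div_self (hv0 x hx), mul_one]

theorem stmt2 (I : Set ℝ) (hIopen : IsOpen I) (hIne : I.Nonempty) (hIconn : I.OrdConnected)
    (γ : ℝ) (f : ℝ → ℝ)
    (hf1 : ∀ x ∈ I, DifferentiableAt ℝ f x)
    (hf2 : ∀ x ∈ I, DifferentiableAt ℝ (deriv f) x)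
    (hf3 : ∀ x ∈ I, DifferentiableAt ℝ (deriv (deriv f)) x)
    (hf' : ∀ x ∈ I, deriv f x ≠ 0) :
    (∃ u v : ℝ → ℝ,
      (∀ x ∈ I, DifferentiableAt ℝ u x) ∧ (∀ x ∈ I, DifferentiableAt ℝ (deriv u) x) ∧
      (∀ x ∈ I, DifferentiableAt ℝ v x) ∧ (∀ x ∈ I, DifferentiableAt ℝ (deriv v) x) ∧
      (∀ x ∈ I, v x ≠ 0) ∧
      (∀ x ∈ I, deriv (deriv u) x = γ * u x) ∧
      (∀ x ∈ I, deriv (deriv v) x = γ * v x) ∧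
      (∀ x ∈ I, f x = u x / v x)) ↔
    (∀ x ∈ I, schwarzian f x = -2 * γ) := by
  constructor
  · rintro ⟨u, v, hu1, hu2, hv1, hv2, hv0, hu'', hv'', hfuv⟩
    exact forward_dir I hIopen γ f u v hf' hu1 hu2 hv1 hv2 hv0 hu'' hv'' hfuv
  · intro hS
    exact backward_dir I hIopen hIne hIconn γ f hf1 hf2 hf3 hf' hS
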